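/- For every separable state ρ on ℂ^{d_A} ⊗ ℂ^{d_B} in Filter Normal Form, the sum of all singular values of its correlation matrix satisfies M_{1,1}(ρ) = Σ_k σ_k(𝒞) ≤ (1 + √( (D−1)(d−1) )) / √(Dd), where D = max{d_A,d_B}, d = min{d_A,d_B}. -/

import Mathlib

open Matrix Finset
open scoped Kronecker ComplexOrder

noncomputable section

/-- An orthonormal family of Hermitian matrices with respect to the
Hilbert–Schmidt inner product `⟨X,Y⟩ = tr (X * Y)`. -/
def IsHSOrthonormal {n m : ℕ} (A : Fin m → Matrix (Fin n) (Fin n) ℂ) : Prop :=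
  (∀ i, (A i).IsHermitian) ∧
  ∀ i j, (A i * A j).trace = if i = j then 1 else 0

/-- A density matrix: positive semidefinite with unit trace. -/
def IsDensityMatrix {n : Type*} [Fintype n] [DecidableEq n] (ρ : Matrix n n ℂ) : Prop :=
  ρ.PosSemidef ∧ ρ.trace = 1

/-- The correlation matrix `𝒞_{ij} = tr (ρ (A_i ⊗ B_j))` (a real number since the
operators involved are Hermitian). -/
def corrMat {dA dB : ℕ} (ρ : Matrix (Fin dA × Fin dB) (Fin dA × Fin dB) ℂ)
    (A : Fin (dA ^ 2) → Matrix (Fin dA) (Fin dA) ℂ)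
    (B : Fin (dB ^ 2) → Matrix (Fin dB) (Fin dB) ℂ) :
    Matrix (Fin (dA ^ 2)) (Fin (dB ^ 2)) ℝ :=
  fun i j => (ρ * (A i ⊗ₖ B j)).trace.re

/-- The rectangular "diagonal" matrix with the entries of `σ` on the diagonal. -/
def svdDiag (m n r : ℕ) (σ : Fin r → ℝ) : Matrix (Fin m) (Fin n) ℝ :=
  fun i j => if h : (i : ℕ) = (j : ℕ) ∧ (i : ℕ) < r then σ ⟨(i : ℕ), h.2⟩ else 0

/-- `σ` is the decreasingly sorted vector of singular values of `C`. -/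
def IsSingularValues {m n r : ℕ} (C : Matrix (Fin m) (Fin n) ℝ) (σ : Fin r → ℝ) : Prop :=
  (∀ k, 0 ≤ σ k) ∧ Antitone σ ∧
  ∃ U : Matrix (Fin m) (Fin m) ℝ, ∃ V : Matrix (Fin n) (Fin n) ℝ,
    Uᵀ * U = 1 ∧ Vᵀ * V = 1 ∧ C = U * svdDiag m n r σ * Vᵀ

/-- A separable bipartite state. -/
def SeparableState {dA dB : ℕ} (ρ : Matrix (Fin dA × Fin dB) (Fin dA × Fin dB) ℂ) : Prop :=
  ∃ (n : ℕ) (w : Fin n → ℝ) (O : Fin n → Matrix (Fin dA) (Fin dA) ℂ)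
    (Q : Fin n → Matrix (Fin dB) (Fin dB) ℂ),
    (∀ k, 0 ≤ w k) ∧ (∑ k, w k = 1) ∧
    (∀ k, IsDensityMatrix (O k)) ∧ (∀ k, IsDensityMatrix (Q k)) ∧
    ρ = ∑ k, (w k : ℂ) • (O k ⊗ₖ Q k)

/-- Filter Normal Form: all traceless local observables have vanishing expectation. -/
def IsFNF {dA dB : ℕ} (ρ : Matrix (Fin dA × Fin dB) (Fin dA × Fin dB) ℂ) : Prop :=
  (∀ A : Matrix (Fin dA) (Fin dA) ℂ, A.IsHermitian → A.trace = 0 →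
    (ρ * (A ⊗ₖ (1 : Matrix (Fin dB) (Fin dB) ℂ))).trace = 0) ∧
  (∀ B : Matrix (Fin dB) (Fin dB) ℂ, B.IsHermitian → B.trace = 0 →
    (ρ * ((1 : Matrix (Fin dA) (Fin dA) ℂ) ⊗ₖ B)).trace = 0)

/-- The Correlation Minor Norm with parameters `h`, `p`, expressed in terms of the
singular values `σ`. -/
def CMN {r : ℕ} (σ : Fin r → ℝ) (h : ℕ) (p : ℝ) : ℝ :=
  (∑ R ∈ Finset.univ.powersetCard h, ∏ k ∈ R, σ k ^ p) ^ (1 / p)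

/-- The Correlation Minor Norm with `p = ∞`: the product of the `h` largest singular
values (the singular values being sorted decreasingly). -/
def CMNinf {r : ℕ} (σ : Fin r → ℝ) (h : ℕ) : ℝ :=
  ∏ k ∈ Finset.univ.filter (fun k : Fin r => (k : ℕ) < h), σ k

/-- The `h`-th elementary symmetric polynomial evaluated at `x`. -/
def esym {n : ℕ} (h : ℕ) (x : Fin n → ℝ) : ℝ :=
  ∑ R ∈ Finset.univ.powersetCard h, ∏ k ∈ R, x k

/-- An orthonormal family of vectors in `ℂ^n`. -/
def IsONFamily {n r : ℕ} (v : Fin r → (Fin n → ℂ)) : Prop :=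
  ∀ k l, star (v k) ⬝ᵥ v l = if k = l then 1 else 0

/-- The rank-one projection `|v⟩⟨v|`. -/
def projOf {n : ℕ} (v : Fin n → ℂ) : Matrix (Fin n) (Fin n) ℂ :=
  Matrix.vecMulVec v (star v)

/-- The post-measurement state `Π[ρ] = Σ_l (|l⟩⟨l| ⊗ 𝟙) ρ (|l⟩⟨l| ⊗ 𝟙)` for the
projective measurement on Alice's side given by the orthonormal basis `e`. -/
def measured {dA dB : ℕ} (ρ : Matrix (Fin dA × Fin dB) (Fin dA × Fin dB) ℂ)
    (e : Fin dA → (Fin dA → ℂ)) : Matrix (Fin dA × Fin dB) (Fin dA × Fin dB) ℂ :=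
  ∑ l, (projOf (e l) ⊗ₖ (1 : Matrix (Fin dB) (Fin dB) ℂ)) * ρ *
       (projOf (e l) ⊗ₖ (1 : Matrix (Fin dB) (Fin dB) ℂ))

/-- A regular, coherent, degree-1 quantum design with `r = 1`: a family of rank-one
orthogonal projections summing to `(v/b)·𝟙` whose pairwise overlaps are constant. -/
def IsQDesign {b v : ℕ} (P : Fin v → Matrix (Fin b) (Fin b) ℂ) : Prop :=
  (∀ k, (P k).IsHermitian) ∧ (∀ k, P k * P k = P k) ∧ (∀ k, (P k).trace = 1) ∧
  (∑ k, P k) = ((v : ℂ) / (b : ℂ)) • 1 ∧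
  ∃ μ : ℝ, ∀ k l, k ≠ l → (P k * P l).trace = (μ : ℂ)

/-- A classical-quantum state `χ = Σ_l q_l |l⟩⟨l| ⊗ ρ_l`. -/
def IsCQState {dA dB : ℕ} (χ : Matrix (Fin dA × Fin dB) (Fin dA × Fin dB) ℂ) : Prop :=
  ∃ e : Fin dA → (Fin dA → ℂ), IsONFamily e ∧
  ∃ (q : Fin dA → ℝ) (τ : Fin dA → Matrix (Fin dB) (Fin dB) ℂ),
    (∀ l, 0 ≤ q l) ∧ (∑ l, q l = 1) ∧ (∀ l, IsDensityMatrix (τ l)) ∧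
    χ = ∑ l, (q l : ℂ) • (projOf (e l) ⊗ₖ τ l)

/-- Squared Frobenius norm. -/
def frobSq {n : Type*} [Fintype n] (M : Matrix n n ℂ) : ℝ :=
  ∑ i, ∑ j, Complex.normSq (M i j)

/-- Geometric quantum discord with respect to Alice's subsystem. -/
def geoDiscord {dA dB : ℕ} (ρ : Matrix (Fin dA × Fin dB) (Fin dA × Fin dB) ℂ) : ℝ :=
  sInf {x : ℝ | ∃ χ, IsCQState χ ∧ x = frobSq (ρ - χ)}

/-- The set of values `M_{h,p}(Π[ρ])^p` over all projective measurements `Π` on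
Alice's subsystem. -/
def measuredCMNSet {dA dB : ℕ} (ρ : Matrix (Fin dA × Fin dB) (Fin dA × Fin dB) ℂ)
    (A : Fin (dA ^ 2) → Matrix (Fin dA) (Fin dA) ℂ)
    (B : Fin (dB ^ 2) → Matrix (Fin dB) (Fin dB) ℂ) (h : ℕ) (p : ℝ) : Set ℝ :=
  {x | ∃ e : Fin dA → (Fin dA → ℂ), IsONFamily e ∧
    ∃ σ' : Fin (min dA dB ^ 2) → ℝ,
      IsSingularValues (corrMat (measured ρ e) A B) σ' ∧ x = CMN σ' h p ^ p}

/-- The vector `Σ_k s_k |φ_k⟩⊗|ξ_k⟩` of a Schmidt decomposition. -/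
def pureVec {dA dB r : ℕ} (s : Fin r → ℝ) (φ : Fin r → (Fin dA → ℂ))
    (ξ : Fin r → (Fin dB → ℂ)) : Fin dA × Fin dB → ℂ :=
  fun i => ∑ k, (s k : ℂ) * φ k i.1 * ξ k i.2

/-! ### Auxiliary lemmas for the proof -/

private lemma herm_trace_real {d : ℕ} {X : Matrix (Fin d) (Fin d) ℂ}
    (hX : X.IsHermitian) : (X.trace).im = 0 := by
  have h : (starRingEnd ℂ) X.trace = X.trace := by
    rw [← Complex.star_def, ← Matrix.trace_conjTranspose, hX]
  exact Complex.conj_eq_iff_im.mp h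

private lemma herm_trace_mul_real {d : ℕ} {X Y : Matrix (Fin d) (Fin d) ℂ}
    (hX : X.IsHermitian) (hY : Y.IsHermitian) : ((X * Y).trace).im = 0 := by
  have h : (starRingEnd ℂ) ((X * Y).trace) = (X * Y).trace := by
    rw [← Complex.star_def, ← Matrix.trace_conjTranspose, Matrix.conjTranspose_mul, hX, hY,
      Matrix.trace_mul_comm]
  exact Complex.conj_eq_iff_im.mp h

private lemma herm_real_smul {d : ℕ} {M : Matrix (Fin d) (Fin d) ℂ} (hM : M.IsHermitian)
    (c : ℝ) : ((c : ℂ) • M).IsHermitian := by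
  unfold Matrix.IsHermitian
  rw [Matrix.conjTranspose_smul, hM]
  congr 1
  simp [Complex.star_def, Complex.conj_ofReal]

/-- Bessel inequality for HS-orthonormal families of Hermitian matrices. -/
private lemma bessel {d m : ℕ} {A : Fin m → Matrix (Fin d) (Fin d) ℂ}
    (hA : IsHSOrthonormal A) {X : Matrix (Fin d) (Fin d) ℂ} (hX : X.IsHermitian) :
    ∑ i, ((X * A i).trace).re ^ 2 ≤ ((X * X).trace).re := by
  set c : Fin m → ℝ := fun i => ((X * A i).trace).re with hc
  have hci : ∀ i, (X * A i).trace = (c i : ℂ) := by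
    intro i
    have := herm_trace_mul_real hX (hA.1 i)
    exact Complex.ext (by simp [hc]) (by simp [this])
  set Z : Matrix (Fin d) (Fin d) ℂ := ∑ i, (c i : ℂ) • A i with hZ
  have hZherm : Z.IsHermitian := by
    unfold Matrix.IsHermitian
    rw [hZ, Matrix.conjTranspose_sum]
    exact Finset.sum_congr rfl (fun i _ => by
      rw [Matrix.conjTranspose_smul, hA.1 i, Complex.star_def, Complex.conj_ofReal])
  have hXZ : (X * Z).trace = ∑ i, ((c i : ℂ) * (c i : ℂ)) := by
    rw [hZ, Finset.mul_sum, Matrix.trace_sum]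
    exact Finset.sum_congr rfl (fun i _ => by
      rw [Matrix.mul_smul, Matrix.trace_smul, hci i, smul_eq_mul])
  have hZZ : (Z * Z).trace = ∑ i, ((c i : ℂ) * (c i : ℂ)) := by
    rw [hZ, Finset.sum_mul, Matrix.trace_sum]
    refine Finset.sum_congr rfl (fun i _ => ?_)
    rw [Finset.mul_sum, Matrix.trace_sum]
    rw [Finset.sum_eq_single i]
    · rw [Matrix.smul_mul, Matrix.mul_smul, Matrix.trace_smul, Matrix.trace_smul, hA.2 i i,
        if_pos rfl, smul_eq_mul, smul_eq_mul, mul_one]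
    · intro j _ hj
      rw [Matrix.smul_mul, Matrix.mul_smul, Matrix.trace_smul, Matrix.trace_smul, hA.2 i j,
        if_neg (fun h => hj h.symm), smul_eq_mul, smul_eq_mul, mul_zero, mul_zero]
    · simp
  set Y : Matrix (Fin d) (Fin d) ℂ := X - Z with hY
  have hYherm : Y.IsHermitian := hX.sub hZherm
  have hpos : 0 ≤ ((Y * Y).trace).re := by
    have h2 : Y * Y = Yᴴ * Y := by rw [hYherm]
    rw [h2]
    simp only [Matrix.trace, Matrix.diag, Matrix.mul_apply, Matrix.conjTranspose_apply,
      Complex.re_sum]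
    apply Finset.sum_nonneg; intro j _
    apply Finset.sum_nonneg; intro i _
    simp only [Complex.mul_re, Complex.star_def, Complex.conj_re, Complex.conj_im, neg_mul,
      sub_neg_eq_add]
    nlinarith [sq_nonneg ((Y i j).re), sq_nonneg ((Y i j).im)]
  have hexp : (Y * Y).trace = (X * X).trace - ∑ i, ((c i : ℂ) * (c i : ℂ)) := by
    rw [hY, sub_mul, mul_sub, mul_sub, Matrix.trace_sub, Matrix.trace_sub, Matrix.trace_sub,
      hXZ, hZZ, Matrix.trace_mul_comm Z X, hXZ]
    ring
  rw [hexp] at hpos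
  simp only [Complex.sub_re, Complex.re_sum, Complex.mul_re, Complex.ofReal_re,
    Complex.ofReal_im, mul_zero, sub_zero] at hpos
  calc ∑ i, (c i) ^ 2 = ∑ i, c i * c i := by simp [sq]
    _ ≤ ((X * X).trace).re := by linarith

/-- A density matrix has purity at most one. -/
private lemma purity {d : ℕ} {O : Matrix (Fin d) (Fin d) ℂ} (hO : IsDensityMatrix O) :
    ((O * O).trace).re ≤ 1 := by
  have hH : O.IsHermitian := hO.1.1
  set lam : Fin d → ℝ := hH.eigenvalues with hlam
  set U : Matrix (Fin d) (Fin d) ℂ :=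
    (Matrix.IsHermitian.eigenvectorUnitary hH : Matrix (Fin d) (Fin d) ℂ) with hUdef
  have hUU : star U * U = 1 :=
    Matrix.mem_unitaryGroup_iff'.mp (Matrix.IsHermitian.eigenvectorUnitary hH).2
  have hspec : O = U * Matrix.diagonal (RCLike.ofReal ∘ lam) * star U := hH.spectral_theorem
  set D : Matrix (Fin d) (Fin d) ℂ := Matrix.diagonal (RCLike.ofReal ∘ lam) with hD
  have htr : O.trace = ∑ i, (lam i : ℂ) := by
    rw [hspec, Matrix.trace_mul_cycle, hUU, one_mul, Matrix.trace_diagonal]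
    rfl
  have htr2 : (O * O).trace = ∑ i, ((lam i : ℂ) * (lam i : ℂ)) := by
    have h5 : O * O = U * (D * D) * star U := by
      rw [hspec]
      simp only [← hD, Matrix.mul_assoc]
      rw [← Matrix.mul_assoc (star U) U, hUU, Matrix.one_mul]
    rw [h5, Matrix.trace_mul_cycle, hUU, one_mul]
    rw [hD, Matrix.diagonal_mul_diagonal, Matrix.trace_diagonal]
    rfl
  have hsum1 : ∑ i, lam i = 1 := by
    have h6 := hO.2
    rw [htr] at h6
    have h7 := congrArg Complex.re h6
    simpa [Complex.re_sum] using h7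
  have hnn : ∀ i, 0 ≤ lam i := hO.1.eigenvalues_nonneg
  have hle : ∀ i, lam i ≤ 1 := by
    intro i
    calc lam i ≤ ∑ j, lam j := Finset.single_le_sum (fun j _ => hnn j) (Finset.mem_univ i)
      _ = 1 := hsum1
  have h8 : ((O * O).trace).re = ∑ i, lam i * lam i := by
    rw [htr2]
    simp [Complex.re_sum, Complex.mul_re]
  rw [h8]
  calc ∑ i, lam i * lam i ≤ ∑ i, lam i * 1 :=
        Finset.sum_le_sum (fun i _ => mul_le_mul_of_nonneg_left (hle i) (hnn i))
    _ = 1 := by simp [hsum1]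

private lemma sum_dite_lt {m r : ℕ} (hrm : r ≤ m) (f : Fin r → ℝ) :
    ∑ i : Fin m, (if h : (i : ℕ) < r then f ⟨(i : ℕ), h⟩ else 0) = ∑ k : Fin r, f k := by
  rw [Fin.sum_univ_eq_sum_range (fun i => if h : i < r then f ⟨i, h⟩ else 0) m]
  rw [← Finset.sum_subset (Finset.range_subset_range.mpr hrm)
    (by intro x _ hx; rw [Finset.mem_range, not_lt] at hx; exact dif_neg (by omega))]
  rw [← Fin.sum_univ_eq_sum_range (fun i => if h : i < r then f ⟨i, h⟩ else 0) r]
  exact Finset.sum_congr rfl (fun k _ => by rw [dif_pos k.isLt])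

private lemma frob_eq_trace {m n : ℕ} (P Q : Matrix (Fin m) (Fin n) ℝ) :
    ∑ i, ∑ j, P i j * Q i j = (Pᵀ * Q).trace := by
  rw [Matrix.trace]
  simp only [Matrix.diag, Matrix.mul_apply, Matrix.transpose_apply]
  exact Finset.sum_comm

private lemma trace_svdDiag_mul {m n r : ℕ} (hrm : r ≤ m) (hrn : r ≤ n) (σ : Fin r → ℝ) :
    ∑ i : Fin m, ∑ j : Fin n, svdDiag m n r σ i j * svdDiag m n r 1 i j = ∑ k, σ k := by
  have hinner : ∀ i : Fin m, ∑ j : Fin n, svdDiag m n r σ i j * svdDiag m n r 1 i j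
      = if h : (i : ℕ) < r then σ ⟨(i : ℕ), h⟩ else 0 := by
    intro i
    by_cases h : (i : ℕ) < r
    · rw [dif_pos h]
      rw [Finset.sum_eq_single ⟨(i : ℕ), lt_of_lt_of_le h hrn⟩]
      · simp [svdDiag, h]
      · intro j _ hj
        have : (i : ℕ) ≠ (j : ℕ) := by
          intro he; apply hj; exact Fin.ext (by simp [← he])
        simp [svdDiag, this]
      · simp
    · rw [dif_neg h]
      apply Finset.sum_eq_zero
      intro j _
      simp [svdDiag, h]
  rw [Finset.sum_congr rfl (fun i _ => hinner i), sum_dite_lt hrm]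

private lemma sum_sigma_eq {m n r : ℕ} (hrm : r ≤ m) (hrn : r ≤ n)
    (σ : Fin r → ℝ) (U : Matrix (Fin m) (Fin m) ℝ) (V : Matrix (Fin n) (Fin n) ℝ)
    (hU : Uᵀ * U = 1) (hV : Vᵀ * V = 1) :
    ∑ i, ∑ j, (U * svdDiag m n r σ * Vᵀ) i j * (U * svdDiag m n r 1 * Vᵀ) i j
      = ∑ k, σ k := by
  rw [frob_eq_trace]
  have h1 : (U * svdDiag m n r σ * Vᵀ)ᵀ * (U * svdDiag m n r 1 * Vᵀ)
      = V * ((svdDiag m n r σ)ᵀ * (svdDiag m n r 1 * Vᵀ)) := by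
    rw [Matrix.transpose_mul, Matrix.transpose_mul, Matrix.transpose_transpose]
    simp only [Matrix.mul_assoc]
    rw [← Matrix.mul_assoc Uᵀ U, hU, Matrix.one_mul]
  rw [h1, Matrix.trace_mul_comm]
  have h2 : (svdDiag m n r σ)ᵀ * (svdDiag m n r 1 * Vᵀ) * V
      = (svdDiag m n r σ)ᵀ * svdDiag m n r 1 := by
    simp only [Matrix.mul_assoc]
    rw [hV, Matrix.mul_one]
  rw [h2, ← frob_eq_trace]
  exact trace_svdDiag_mul hrm hrn σ

private lemma vecMul_orth {m : ℕ} {U : Matrix (Fin m) (Fin m) ℝ} (hU : Uᵀ * U = 1)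
    (x : Fin m → ℝ) : ∑ i, (x ᵥ* U) i ^ 2 = ∑ i, x i ^ 2 := by
  have hUU : U * Uᵀ = 1 := mul_eq_one_comm.mp hU
  have h1 : ∑ i, (x ᵥ* U) i ^ 2 = (x ᵥ* U) ⬝ᵥ (x ᵥ* U) := by
    simp [dotProduct, sq]
  rw [h1, ← Matrix.dotProduct_mulVec, ← Matrix.mulVec_transpose U x, Matrix.mulVec_mulVec,
    hUU, Matrix.one_mulVec]
  simp [dotProduct, sq]

private lemma contraction {m n r : ℕ} (hrm : r ≤ m) (hrn : r ≤ n)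
    {U : Matrix (Fin m) (Fin m) ℝ} {V : Matrix (Fin n) (Fin n) ℝ}
    (hU : Uᵀ * U = 1) (hV : Vᵀ * V = 1)
    (x : Fin m → ℝ) (y : Fin n → ℝ) :
    x ⬝ᵥ (U * svdDiag m n r 1 * Vᵀ) *ᵥ y
      ≤ Real.sqrt (∑ i, x i ^ 2) * Real.sqrt (∑ j, y j ^ 2) := by
  set p : Fin m → ℝ := x ᵥ* U with hp
  set q : Fin n → ℝ := y ᵥ* V with hq
  have hstep : x ⬝ᵥ (U * svdDiag m n r 1 * Vᵀ) *ᵥ y = p ⬝ᵥ (svdDiag m n r 1) *ᵥ q := by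
    rw [← Matrix.mulVec_mulVec, ← Matrix.mulVec_mulVec, Matrix.dotProduct_mulVec,
      Matrix.mulVec_transpose]
  set g : Fin m → ℝ := fun i =>
    if h : (i : ℕ) < r then q ⟨(i : ℕ), lt_of_lt_of_le h hrn⟩ else 0 with hg
  have hEq : (svdDiag m n r 1) *ᵥ q = g := by
    funext i
    show ∑ j, svdDiag m n r 1 i j * q j = g i
    by_cases h : (i : ℕ) < r
    · rw [hg]
      simp only [dif_pos h]
      rw [Finset.sum_eq_single ⟨(i : ℕ), lt_of_lt_of_le h hrn⟩]
      · simp [svdDiag, h]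
      · intro j _ hj
        have : (i : ℕ) ≠ (j : ℕ) := fun he => hj (Fin.ext (by simp [← he]))
        simp [svdDiag, this]
      · simp
    · rw [hg]
      simp only [dif_neg h]
      apply Finset.sum_eq_zero
      intro j _
      simp [svdDiag, h]
  have hCS : p ⬝ᵥ g ≤ Real.sqrt (∑ i, p i ^ 2) * Real.sqrt (∑ i, g i ^ 2) :=
    Real.sum_mul_le_sqrt_mul_sqrt Finset.univ p g
  have hgsum : ∑ i, g i ^ 2 ≤ ∑ j, q j ^ 2 := by
    have h1 : ∑ i : Fin m, g i ^ 2 = ∑ k : Fin r, q (Fin.castLE hrn k) ^ 2 := by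
      rw [← sum_dite_lt hrm (fun k => q (Fin.castLE hrn k) ^ 2)]
      refine Finset.sum_congr rfl (fun i _ => ?_)
      rw [hg]
      by_cases h : (i : ℕ) < r
      · simp only [dif_pos h]; rfl
      · simp only [dif_neg h]; ring
    have h2 := Finset.sum_image (f := fun j => q j ^ 2) (g := Fin.castLE hrn)
      (s := Finset.univ) (fun a _ b _ hab => Fin.castLE_injective hrn hab)
    rw [h1, ← h2]
    exact Finset.sum_le_sum_of_subset_of_nonneg (Finset.subset_univ _)
      (fun j _ _ => sq_nonneg _)
  calc x ⬝ᵥ (U * svdDiag m n r 1 * Vᵀ) *ᵥ y = p ⬝ᵥ g := by rw [hstep, hEq]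
    _ ≤ Real.sqrt (∑ i, p i ^ 2) * Real.sqrt (∑ i, g i ^ 2) := hCS
    _ ≤ Real.sqrt (∑ i, x i ^ 2) * Real.sqrt (∑ j, y j ^ 2) := by
        rw [vecMul_orth hU x]
        exact mul_le_mul_of_nonneg_left
          (Real.sqrt_le_sqrt (le_trans hgsum (le_of_eq (vecMul_orth hV y))))
          (Real.sqrt_nonneg _)

private lemma dot_mulVec_sum {m n nn : ℕ} (u : Fin m → ℝ) (W : Matrix (Fin m) (Fin n) ℝ)
    (cf : Fin nn → ℝ) (f : Fin nn → Fin n → ℝ) :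
    ∑ k, cf k * (u ⬝ᵥ W *ᵥ f k) = u ⬝ᵥ W *ᵥ (∑ k, cf k • f k) := by
  have L : ∑ k, cf k * (u ⬝ᵥ W *ᵥ f k)
      = ∑ k, ∑ i, ∑ j, cf k * (u i * (W i j * f k j)) := by
    simp only [dotProduct, Matrix.mulVec, Finset.mul_sum]
  have R : u ⬝ᵥ W *ᵥ (∑ k, cf k • f k)
      = ∑ i, ∑ j, ∑ k, u i * (W i j * (cf k * f k j)) := by
    simp only [dotProduct, Matrix.mulVec, Finset.sum_apply, Pi.smul_apply,
      smul_eq_mul, Finset.mul_sum]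
  rw [L, R, Finset.sum_comm]
  refine Finset.sum_congr rfl (fun i _ => ?_)
  rw [Finset.sum_comm]
  exact Finset.sum_congr rfl (fun j _ => Finset.sum_congr rfl (fun k _ => by ring))

private lemma sum_dot_mulVec {m n nn : ℕ} (v : Fin n → ℝ) (W : Matrix (Fin m) (Fin n) ℝ)
    (cf : Fin nn → ℝ) (f : Fin nn → Fin m → ℝ) :
    ∑ k, cf k * (f k ⬝ᵥ W *ᵥ v) = (∑ k, cf k • f k) ⬝ᵥ W *ᵥ v := by
  have L : ∑ k, cf k * (f k ⬝ᵥ W *ᵥ v)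
      = ∑ k, ∑ i, ∑ j, cf k * (f k i * (W i j * v j)) := by
    simp only [dotProduct, Matrix.mulVec, Finset.mul_sum]
  have R : (∑ k, cf k • f k) ⬝ᵥ W *ᵥ v
      = ∑ i, ∑ j, ∑ k, (cf k * f k i) * (W i j * v j) := by
    simp only [dotProduct, Matrix.mulVec, Finset.sum_apply, Pi.smul_apply,
      smul_eq_mul, Finset.sum_mul, Finset.mul_sum]
  rw [L, R, Finset.sum_comm]
  refine Finset.sum_congr rfl (fun i _ => ?_)
  rw [Finset.sum_comm]
  exact Finset.sum_congr rfl (fun j _ => Finset.sum_congr rfl (fun k _ => by ring))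

/-- (CM criterion.) For every separable state in Filter Normal Form,
the sum of all singular values of the correlation matrix satisfies
`M_{1,1}(ρ) = Σ_k σ_k ≤ (1 + √((D−1)(d−1)))/√(Dd)`. -/
theorem trace_norm_bound_of_separable_FNF
    (dA dB : ℕ) (hdA : 0 < dA) (hdB : 0 < dB)
    (A : Fin (dA ^ 2) → Matrix (Fin dA) (Fin dA) ℂ)
    (B : Fin (dB ^ 2) → Matrix (Fin dB) (Fin dB) ℂ)
    (hA : IsHSOrthonormal A) (hB : IsHSOrthonormal B)
    (ρ : Matrix (Fin dA × Fin dB) (Fin dA × Fin dB) ℂ)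
    (hρ : IsDensityMatrix ρ) (hsep : SeparableState ρ) (hfnf : IsFNF ρ)
    (σ : Fin (min dA dB ^ 2) → ℝ)
    (hσ : IsSingularValues (corrMat ρ A B) σ) :
    ∑ k, σ k ≤
      (1 + Real.sqrt (((max dA dB : ℝ) - 1) * ((min dA dB : ℝ) - 1))) /
        Real.sqrt ((max dA dB : ℝ) * (min dA dB : ℝ)) := by
  obtain ⟨nn, w, O, Q, hw0, hw1, hOd, hQd, hrho⟩ := hsep
  obtain ⟨hσ0, _hmono, U, V, hU, hV, hCsvd⟩ := hσ
  have hdA0 : (0:ℝ) < dA := by exact_mod_cast hdA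
  have hdB0 : (0:ℝ) < dB := by exact_mod_cast hdB
  have hdA1 : (1:ℝ) ≤ dA := by exact_mod_cast hdA
  have hdB1 : (1:ℝ) ≤ dB := by exact_mod_cast hdB
  set sA : ℝ := Real.sqrt dA with hsAdef
  set sB : ℝ := Real.sqrt dB with hsBdef
  have hsA2 : sA * sA = (dA:ℝ) := Real.mul_self_sqrt hdA0.le
  have hsB2 : sB * sB = (dB:ℝ) := Real.mul_self_sqrt hdB0.le
  have hsA0 : 0 < sA := Real.sqrt_pos.mpr hdA0
  have hsB0 : 0 < sB := Real.sqrt_pos.mpr hdB0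
  have hrm : min dA dB ^ 2 ≤ dA ^ 2 := Nat.pow_le_pow_left (min_le_left _ _) 2
  have hrn : min dA dB ^ 2 ≤ dB ^ 2 := Nat.pow_le_pow_left (min_le_right _ _) 2
  set W : Matrix (Fin (dA ^ 2)) (Fin (dB ^ 2)) ℝ :=
    U * svdDiag (dA ^ 2) (dB ^ 2) (min dA dB ^ 2) 1 * Vᵀ with hWdef
  have hOH : ∀ k, (O k).IsHermitian := fun k => (hOd k).1.1
  have hQH : ∀ k, (Q k).IsHermitian := fun k => (hQd k).1.1
  have htr : ∀ (X : Matrix (Fin dA) (Fin dA) ℂ) (Y : Matrix (Fin dB) (Fin dB) ℂ),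
      (ρ * (X ⊗ₖ Y)).trace = ∑ k, (w k : ℂ) * ((O k * X).trace * (Q k * Y).trace) := by
    intro X Y
    rw [hrho, Finset.sum_mul, Matrix.trace_sum]
    refine Finset.sum_congr rfl (fun k _ => ?_)
    rw [Matrix.smul_mul, ← Matrix.mul_kronecker_mul, Matrix.trace_smul, Matrix.trace_kronecker,
      smul_eq_mul]
  set a : Fin nn → Fin (dA ^ 2) → ℝ := fun k i => ((O k * A i).trace).re with ha
  set b : Fin nn → Fin (dB ^ 2) → ℝ := fun k j => ((Q k * B j).trace).re with hb
  set u : Fin (dA ^ 2) → ℝ := fun i => ((A i).trace).re / sA with hudef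
  set v : Fin (dB ^ 2) → ℝ := fun j => ((B j).trace).re / sB with hvdef
  set c : Fin nn → Fin (dA ^ 2) → ℝ := fun k i => a k i - u i / sA with hcdef
  set e : Fin nn → Fin (dB ^ 2) → ℝ := fun k j => b k j - v j / sB with hedef
  have hcorr : ∀ i j, corrMat ρ A B i j = ∑ k, w k * (a k i * b k j) := by
    intro i j
    show ((ρ * (A i ⊗ₖ B j)).trace).re = _
    rw [htr (A i) (B j), Complex.re_sum]
    refine Finset.sum_congr rfl (fun k _ => ?_)
    have h1 := herm_trace_mul_real (hOH k) (hA.1 i)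
    have h2 := herm_trace_mul_real (hQH k) (hB.1 j)
    simp only [ha, hb, Complex.mul_re, Complex.mul_im, Complex.ofReal_re, Complex.ofReal_im,
      h1, h2, zero_mul, mul_zero, sub_zero, add_zero]
  have hform : ∀ (x : Fin (dA ^ 2) → ℝ) (y : Fin (dB ^ 2) → ℝ),
      x ⬝ᵥ W *ᵥ y = ∑ i, ∑ j, x i * y j * W i j := by
    intro x y
    simp only [dotProduct, Matrix.mulVec, Finset.mul_sum]
    exact Finset.sum_congr rfl (fun i _ => Finset.sum_congr rfl (fun j _ => by ring))
  have hsumsv : ∑ k, σ k = ∑ k, w k * (a k ⬝ᵥ W *ᵥ b k) := by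
    have h2 := sum_sigma_eq hrm hrn σ U V hU hV
    rw [← hCsvd] at h2
    rw [← h2]
    calc ∑ i, ∑ j, corrMat ρ A B i j * W i j
        = ∑ i, ∑ j, ∑ k, w k * (a k i * b k j) * W i j := by
          refine Finset.sum_congr rfl (fun i _ => Finset.sum_congr rfl (fun j _ => ?_))
          rw [hcorr i j, Finset.sum_mul]
      _ = ∑ i, ∑ k, ∑ j, w k * (a k i * b k j) * W i j :=
          Finset.sum_congr rfl (fun i _ => Finset.sum_comm)
      _ = ∑ k, ∑ i, ∑ j, w k * (a k i * b k j) * W i j := Finset.sum_comm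
      _ = ∑ k, w k * (a k ⬝ᵥ W *ᵥ b k) := by
          refine Finset.sum_congr rfl (fun k _ => ?_)
          rw [hform, Finset.mul_sum]
          refine Finset.sum_congr rfl (fun i _ => ?_)
          rw [Finset.mul_sum]
          exact Finset.sum_congr rfl (fun j _ => by ring)
  have hwsumC : ∑ k, ((w k : ℝ) : ℂ) = 1 := by
    rw [← Complex.ofReal_sum, hw1, Complex.ofReal_one]
  -- FNF consequences
  have hbkey : ∀ j, ∑ k, w k * ((Q k * B j).trace).re = ((B j).trace).re / dB := by
    intro j
    have htim : ((B j).trace).im = 0 := herm_trace_real (hB.1 j)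
    have htre : ((((B j).trace).re : ℝ) : ℂ) = (B j).trace :=
      Complex.ext (by simp) (by simp [htim])
    set B' : Matrix (Fin dB) (Fin dB) ℂ :=
      B j - (((((B j).trace).re / dB : ℝ)) : ℂ) • 1 with hB'def
    have hB'h : B'.IsHermitian := (hB.1 j).sub (herm_real_smul Matrix.isHermitian_one _)
    have hB't : B'.trace = 0 := by
      rw [hB'def, Matrix.trace_sub, Matrix.trace_smul, Matrix.trace_one, smul_eq_mul]
      rw [← htre]
      push_cast
      have : (dB:ℂ) ≠ 0 := by exact_mod_cast (ne_of_gt hdB0)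
      field_simp
      simp [Fintype.card_fin]
    have h0 := hfnf.2 B' hB'h hB't
    rw [htr 1 B'] at h0
    have h0' : ∑ k, (w k : ℂ) * ((Q k * B j).trace - (((((B j).trace).re / dB : ℝ)) : ℂ)) = 0 := by
      rw [← h0]
      refine Finset.sum_congr rfl (fun k _ => ?_)
      congr 1
      rw [Matrix.mul_one, (hOd k).2, one_mul, hB'def, Matrix.mul_sub, Matrix.mul_smul,
        Matrix.mul_one, Matrix.trace_sub, Matrix.trace_smul, (hQd k).2, smul_eq_mul, mul_one]
    have h3 : ∑ k, (w k : ℂ) * (Q k * B j).trace = (((((B j).trace).re / dB : ℝ)) : ℂ) := by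
      have h4 : ∑ k, (w k : ℂ) * ((Q k * B j).trace - (((((B j).trace).re / dB : ℝ)) : ℂ))
          = ∑ k, (w k : ℂ) * (Q k * B j).trace
            - (∑ k, ((w k : ℝ) : ℂ)) * (((((B j).trace).re / dB : ℝ)) : ℂ) := by
        rw [Finset.sum_mul, ← Finset.sum_sub_distrib]
        exact Finset.sum_congr rfl (fun k _ => by ring)
      rw [h4, hwsumC, one_mul] at h0'
      exact sub_eq_zero.mp h0'
    have h5 := congrArg Complex.re h3
    rw [Complex.re_sum] at h5
    simpa only [Complex.mul_re, Complex.ofReal_re, Complex.ofReal_im, zero_mul,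
      sub_zero] using h5
  have hakey : ∀ i, ∑ k, w k * ((O k * A i).trace).re = ((A i).trace).re / dA := by
    intro i
    have htim : ((A i).trace).im = 0 := herm_trace_real (hA.1 i)
    have htre : ((((A i).trace).re : ℝ) : ℂ) = (A i).trace :=
      Complex.ext (by simp) (by simp [htim])
    set A' : Matrix (Fin dA) (Fin dA) ℂ :=
      A i - (((((A i).trace).re / dA : ℝ)) : ℂ) • 1 with hA'def
    have hA'h : A'.IsHermitian := (hA.1 i).sub (herm_real_smul Matrix.isHermitian_one _)
    have hA't : A'.trace = 0 := by
      rw [hA'def, Matrix.trace_sub, Matrix.trace_smul, Matrix.trace_one, smul_eq_mul]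
      rw [← htre]
      push_cast
      have : (dA:ℂ) ≠ 0 := by exact_mod_cast (ne_of_gt hdA0)
      field_simp
      simp [Fintype.card_fin]
    have h0 := hfnf.1 A' hA'h hA't
    rw [htr A' 1] at h0
    have h0' : ∑ k, (w k : ℂ) * ((O k * A i).trace - (((((A i).trace).re / dA : ℝ)) : ℂ)) = 0 := by
      rw [← h0]
      refine Finset.sum_congr rfl (fun k _ => ?_)
      congr 1
      rw [Matrix.mul_one, (hQd k).2, mul_one, hA'def, Matrix.mul_sub, Matrix.mul_smul,
        Matrix.mul_one, Matrix.trace_sub, Matrix.trace_smul, smul_eq_mul, (hOd k).2, mul_one]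
    have h3 : ∑ k, (w k : ℂ) * (O k * A i).trace = (((((A i).trace).re / dA : ℝ)) : ℂ) := by
      have h4 : ∑ k, (w k : ℂ) * ((O k * A i).trace - (((((A i).trace).re / dA : ℝ)) : ℂ))
          = ∑ k, (w k : ℂ) * (O k * A i).trace
            - (∑ k, ((w k : ℝ) : ℂ)) * (((((A i).trace).re / dA : ℝ)) : ℂ) := by
        rw [Finset.sum_mul, ← Finset.sum_sub_distrib]
        exact Finset.sum_congr rfl (fun k _ => by ring)
      rw [h4, hwsumC, one_mul] at h0'
      exact sub_eq_zero.mp h0'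
    have h5 := congrArg Complex.re h3
    rw [Complex.re_sum] at h5
    simpa only [Complex.mul_re, Complex.ofReal_re, Complex.ofReal_im, zero_mul,
      sub_zero] using h5
  have hezero : ∑ k, w k • e k = 0 := by
    funext j
    simp only [Finset.sum_apply, Pi.smul_apply, smul_eq_mul, Pi.zero_apply, hedef, hb, hvdef]
    have hsplit : ∑ k, w k * (((Q k * B j).trace).re - ((B j).trace).re / sB / sB)
        = (∑ k, w k * ((Q k * B j).trace).re)
          - (∑ k, w k) * (((B j).trace).re / sB / sB) := by
      rw [Finset.sum_mul, ← Finset.sum_sub_distrib]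
      exact Finset.sum_congr rfl (fun k _ => by ring)
    rw [hsplit, hbkey j, hw1, one_mul, div_div, hsB2, sub_self]
  have hczero : ∑ k, w k • c k = 0 := by
    funext i
    simp only [Finset.sum_apply, Pi.smul_apply, smul_eq_mul, Pi.zero_apply, hcdef, ha, hudef]
    have hsplit : ∑ k, w k * (((O k * A i).trace).re - ((A i).trace).re / sA / sA)
        = (∑ k, w k * ((O k * A i).trace).re)
          - (∑ k, w k) * (((A i).trace).re / sA / sA) := by
      rw [Finset.sum_mul, ← Finset.sum_sub_distrib]
      exact Finset.sum_congr rfl (fun k _ => by ring)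
    rw [hsplit, hakey i, hw1, one_mul, div_div, hsA2, sub_self]
  -- Bessel bounds
  have husum : ∑ i, u i ^ 2 ≤ 1 := by
    have h := bessel hA (X := (1 : Matrix (Fin dA) (Fin dA) ℂ)) Matrix.isHermitian_one
    simp only [Matrix.one_mul, Matrix.trace_one, Fintype.card_fin, Complex.natCast_re] at h
    have heq : ∑ i, u i ^ 2 = (∑ i, ((A i).trace).re ^ 2) / (dA : ℝ) := by
      rw [Finset.sum_div]
      refine Finset.sum_congr rfl (fun i _ => ?_)
      simp only [hudef]
      rw [div_pow, sq sA, hsA2]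
    rw [heq, div_le_one hdA0]
    exact h
  have hvsum : ∑ j, v j ^ 2 ≤ 1 := by
    have h := bessel hB (X := (1 : Matrix (Fin dB) (Fin dB) ℂ)) Matrix.isHermitian_one
    simp only [Matrix.one_mul, Matrix.trace_one, Fintype.card_fin, Complex.natCast_re] at h
    have heq : ∑ j, v j ^ 2 = (∑ j, ((B j).trace).re ^ 2) / (dB : ℝ) := by
      rw [Finset.sum_div]
      refine Finset.sum_congr rfl (fun j _ => ?_)
      simp only [hvdef]
      rw [div_pow, sq sB, hsB2]
    rw [heq, div_le_one hdB0]
    exact h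
  have hcsum : ∀ k, ∑ i, c k i ^ 2 ≤ ((dA:ℝ) - 1) / dA := by
    intro k
    set X : Matrix (Fin dA) (Fin dA) ℂ := O k - ((1 / (dA:ℝ) : ℝ) : ℂ) • 1 with hXdef
    have hXh : X.IsHermitian := (hOH k).sub (herm_real_smul Matrix.isHermitian_one _)
    have hXA : ∀ i, ((X * A i).trace).re = c k i := by
      intro i
      rw [hXdef, Matrix.sub_mul, Matrix.smul_mul, Matrix.one_mul, Matrix.trace_sub,
        Matrix.trace_smul]
      simp only [Complex.sub_re, smul_eq_mul, Complex.mul_re, Complex.ofReal_re,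
        Complex.ofReal_im, zero_mul, sub_zero]
      simp only [hcdef, ha, hudef]
      rw [div_div, hsA2]
      ring
    have h := bessel hA hXh
    rw [Finset.sum_congr rfl (fun i _ => by rw [hXA i])] at h
    have hgd : ((1 / (dA:ℝ) : ℝ) : ℂ) * ((1 : Matrix (Fin dA) (Fin dA) ℂ)).trace = 1 := by
      rw [Matrix.trace_one, Fintype.card_fin]
      push_cast
      field_simp
    have hXX : (X * X).trace = (O k * O k).trace - ((1 / (dA:ℝ) : ℝ) : ℂ) := by
      rw [hXdef]
      simp only [Matrix.sub_mul, Matrix.mul_sub, Matrix.smul_mul, Matrix.mul_smul,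
        Matrix.one_mul, Matrix.mul_one, Matrix.trace_sub, Matrix.trace_smul, smul_eq_mul,
        (hOd k).2, mul_one, smul_smul, Matrix.trace_one]
      have hdc : ((1 / (dA:ℝ) : ℝ) : ℂ) * ((Fintype.card (Fin dA) : ℕ) : ℂ) = 1 := by
        rw [Fintype.card_fin]
        have hne : ((dA:ℕ):ℂ) ≠ 0 := Nat.cast_ne_zero.mpr hdA.ne'
        push_cast
        field_simp
      linear_combination ((1 / (dA:ℝ) : ℝ) : ℂ) * hdc
    have hXXre : ((X * X).trace).re = ((O k * O k).trace).re - 1 / (dA:ℝ) := by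
      rw [hXX, Complex.sub_re, Complex.ofReal_re]
    rw [hXXre] at h
    have hp := purity (hOd k)
    calc ∑ i, c k i ^ 2 ≤ ((O k * O k).trace).re - 1 / (dA:ℝ) := h
      _ ≤ 1 - 1 / (dA:ℝ) := by linarith
      _ = ((dA:ℝ) - 1) / dA := by field_simp
  have hesum : ∀ k, ∑ j, e k j ^ 2 ≤ ((dB:ℝ) - 1) / dB := by
    intro k
    set X : Matrix (Fin dB) (Fin dB) ℂ := Q k - ((1 / (dB:ℝ) : ℝ) : ℂ) • 1 with hXdef
    have hXh : X.IsHermitian := (hQH k).sub (herm_real_smul Matrix.isHermitian_one _)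
    have hXB : ∀ j, ((X * B j).trace).re = e k j := by
      intro j
      rw [hXdef, Matrix.sub_mul, Matrix.smul_mul, Matrix.one_mul, Matrix.trace_sub,
        Matrix.trace_smul]
      simp only [Complex.sub_re, smul_eq_mul, Complex.mul_re, Complex.ofReal_re,
        Complex.ofReal_im, zero_mul, sub_zero]
      simp only [hedef, hb, hvdef]
      rw [div_div, hsB2]
      ring
    have h := bessel hB hXh
    rw [Finset.sum_congr rfl (fun j _ => by rw [hXB j])] at h
    have hXX : (X * X).trace = (Q k * Q k).trace - ((1 / (dB:ℝ) : ℝ) : ℂ) := by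
      rw [hXdef]
      simp only [Matrix.sub_mul, Matrix.mul_sub, Matrix.smul_mul, Matrix.mul_smul,
        Matrix.one_mul, Matrix.mul_one, Matrix.trace_sub, Matrix.trace_smul, smul_eq_mul,
        (hQd k).2, mul_one, smul_smul, Matrix.trace_one]
      have hdc : ((1 / (dB:ℝ) : ℝ) : ℂ) * ((Fintype.card (Fin dB) : ℕ) : ℂ) = 1 := by
        rw [Fintype.card_fin]
        have hne : ((dB:ℕ):ℂ) ≠ 0 := Nat.cast_ne_zero.mpr hdB.ne'
        push_cast
        field_simp
      linear_combination ((1 / (dB:ℝ) : ℝ) : ℂ) * hdc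
    have hXXre : ((X * X).trace).re = ((Q k * Q k).trace).re - 1 / (dB:ℝ) := by
      rw [hXX, Complex.sub_re, Complex.ofReal_re]
    rw [hXXre] at h
    have hp := purity (hQd k)
    calc ∑ j, e k j ^ 2 ≤ ((Q k * Q k).trace).re - 1 / (dB:ℝ) := h
      _ ≤ 1 - 1 / (dB:ℝ) := by linarith
      _ = ((dB:ℝ) - 1) / dB := by field_simp
  -- contraction instances
  have hcontr : ∀ (x : Fin (dA ^ 2) → ℝ) (y : Fin (dB ^ 2) → ℝ),
      x ⬝ᵥ W *ᵥ y ≤ Real.sqrt (∑ i, x i ^ 2) * Real.sqrt (∑ j, y j ^ 2) := by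
    intro x y
    have h := contraction hrm hrn hU hV x y
    rw [← hWdef] at h
    exact h
  -- decompose the correlation sum
  have hdec : ∀ k, a k ⬝ᵥ W *ᵥ b k
      = (1/(sA*sB)) * (u ⬝ᵥ W *ᵥ v) + ((1/sA) * (u ⬝ᵥ W *ᵥ e k)
        + ((1/sB) * (c k ⬝ᵥ W *ᵥ v) + c k ⬝ᵥ W *ᵥ e k)) := by
    intro k
    rw [hform, hform, hform, hform, hform]
    simp only [Finset.mul_sum]
    rw [← Finset.sum_add_distrib, ← Finset.sum_add_distrib, ← Finset.sum_add_distrib]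
    refine Finset.sum_congr rfl (fun i _ => ?_)
    rw [← Finset.sum_add_distrib, ← Finset.sum_add_distrib, ← Finset.sum_add_distrib]
    refine Finset.sum_congr rfl (fun j _ => ?_)
    simp only [hcdef, hedef]
    field_simp
    ring
  have hmaster : ∑ k, w k * (a k ⬝ᵥ W *ᵥ b k)
      = (1/(sA*sB)) * (u ⬝ᵥ W *ᵥ v) + ∑ k, w k * (c k ⬝ᵥ W *ᵥ e k) := by
    calc ∑ k, w k * (a k ⬝ᵥ W *ᵥ b k)
        = ∑ k, (w k * ((1/(sA*sB)) * (u ⬝ᵥ W *ᵥ v)) + ((1/sA) * (w k * (u ⬝ᵥ W *ᵥ e k))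
            + ((1/sB) * (w k * (c k ⬝ᵥ W *ᵥ v)) + w k * (c k ⬝ᵥ W *ᵥ e k)))) := by
          refine Finset.sum_congr rfl (fun k _ => ?_)
          rw [hdec k]; ring
      _ = (∑ k, w k) * ((1/(sA*sB)) * (u ⬝ᵥ W *ᵥ v))
            + ((1/sA) * (∑ k, w k * (u ⬝ᵥ W *ᵥ e k))
            + ((1/sB) * (∑ k, w k * (c k ⬝ᵥ W *ᵥ v)) + ∑ k, w k * (c k ⬝ᵥ W *ᵥ e k))) := by
          rw [Finset.sum_add_distrib, Finset.sum_add_distrib, Finset.sum_add_distrib,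
            ← Finset.sum_mul, ← Finset.mul_sum, ← Finset.mul_sum]
      _ = (1/(sA*sB)) * (u ⬝ᵥ W *ᵥ v) + ∑ k, w k * (c k ⬝ᵥ W *ᵥ e k) := by
          rw [dot_mulVec_sum u W w e, sum_dot_mulVec v W w c, hezero, hczero, hw1, one_mul,
            Matrix.mulVec_zero, dotProduct_zero, zero_dotProduct, mul_zero,
            mul_zero, zero_add, zero_add]
  -- bound the two remaining terms
  have hterm1 : (1/(sA*sB)) * (u ⬝ᵥ W *ᵥ v) ≤ 1/(sA*sB) := by
    have h1 : u ⬝ᵥ W *ᵥ v ≤ 1 := by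
      calc u ⬝ᵥ W *ᵥ v ≤ Real.sqrt (∑ i, u i ^ 2) * Real.sqrt (∑ j, v j ^ 2) := hcontr u v
        _ ≤ 1 * 1 := by
            apply mul_le_mul
            · exact Real.sqrt_le_one.mpr husum
            · exact Real.sqrt_le_one.mpr hvsum
            · exact Real.sqrt_nonneg _
            · norm_num
        _ = 1 := by norm_num
    have h2 : (0:ℝ) < 1/(sA*sB) := by positivity
    calc (1/(sA*sB)) * (u ⬝ᵥ W *ᵥ v) ≤ (1/(sA*sB)) * 1 :=
          mul_le_mul_of_nonneg_left h1 h2.le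
      _ = 1/(sA*sB) := mul_one _
  set K : ℝ := Real.sqrt (((dA:ℝ) - 1) / dA) * Real.sqrt (((dB:ℝ) - 1) / dB) with hKdef
  have hterm4 : ∑ k, w k * (c k ⬝ᵥ W *ᵥ e k) ≤ K := by
    have hbd : ∀ k, c k ⬝ᵥ W *ᵥ e k ≤ K := by
      intro k
      calc c k ⬝ᵥ W *ᵥ e k
          ≤ Real.sqrt (∑ i, c k i ^ 2) * Real.sqrt (∑ j, e k j ^ 2) := hcontr (c k) (e k)
        _ ≤ K := by
            rw [hKdef]
            apply mul_le_mul
            · exact Real.sqrt_le_sqrt (hcsum k)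
            · exact Real.sqrt_le_sqrt (hesum k)
            · exact Real.sqrt_nonneg _
            · exact Real.sqrt_nonneg _
    calc ∑ k, w k * (c k ⬝ᵥ W *ᵥ e k) ≤ ∑ k, w k * K :=
          Finset.sum_le_sum (fun k _ => mul_le_mul_of_nonneg_left (hbd k) (hw0 k))
      _ = K := by rw [← Finset.sum_mul, hw1, one_mul]
  have hmain : ∑ k, σ k ≤ 1/(sA*sB) + K := by
    rw [hsumsv, hmaster]
    exact add_le_add hterm1 hterm4
  -- final algebra
  have hKform : 1/(sA*sB) + K
      = (1 + Real.sqrt (((dA:ℝ) - 1) * ((dB:ℝ) - 1))) / Real.sqrt ((dA:ℝ) * dB) := by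
    have h1 : sA * sB = Real.sqrt ((dA:ℝ) * dB) := by
      rw [hsAdef, hsBdef, ← Real.sqrt_mul hdA0.le]
    have h2 : K = Real.sqrt ((((dA:ℝ) - 1) * ((dB:ℝ) - 1)) / ((dA:ℝ) * dB)) := by
      rw [hKdef, ← Real.sqrt_mul (div_nonneg (by linarith) hdA0.le), div_mul_div_comm]
    rw [h1, h2, Real.sqrt_div (mul_nonneg (by linarith) (by linarith) : (0:ℝ) ≤ ((dA:ℝ) - 1) * ((dB:ℝ) - 1)),
      ← add_div]
  rcases le_total (dA:ℝ) (dB:ℝ) with hcase | hcase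
  · rw [max_eq_right hcase, min_eq_left hcase]
    calc ∑ k, σ k ≤ 1/(sA*sB) + K := hmain
      _ = (1 + Real.sqrt (((dA:ℝ) - 1) * ((dB:ℝ) - 1))) / Real.sqrt ((dA:ℝ) * dB) := hKform
      _ = (1 + Real.sqrt (((dB:ℝ) - 1) * ((dA:ℝ) - 1))) / Real.sqrt ((dB:ℝ) * dA) := by
          rw [mul_comm ((dA:ℝ) - 1), mul_comm (dA:ℝ)]
  · rw [max_eq_left hcase, min_eq_right hcase]
    calc ∑ k, σ k ≤ 1/(sA*sB) + K := hmain
      _ = (1 + Real.sqrt (((dA:ℝ) - 1) * ((dB:ℝ) - 1))) / Real.sqrt ((dA:ℝ) * dB) := hKform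
end
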